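/- In the canonical representation of Q₂ on ℓ²(ℤ) (U e_k = e_{k+1}, S₂ e_k = e_{2k}, S₁ := U S₂ so S₁ e_k = e_{2k+1}), for any word α = (α₁, …, α_m) ∈ {1,2}^m, the range of the projection P_α = S_α S_α* (where S_α = S_{α₁}⋯S_{α_m}) is the closed span of {e_{2^m k + l} : k ∈ ℤ} for some l ∈ ℕ depending on α with 0 ≤ l < 2^m. Consequently, for every integer h with 0 < h < 2^m, the projections U^h P_α U^{-h} and P_α are orthogonal, i.e. U^h P_α U^{-h} · P_α = 0. -/

import Mathlib

open ContinuousLinearMap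
open scoped InnerProductSpace

noncomputable def e (k : ℤ) : lp (fun _ : ℤ => ℂ) 2 := lp.single 2 k 1

noncomputable abbrev H := lp (fun _ : ℤ => ℂ) 2

lemma e_apply (k j : ℤ) : (e k : ∀ _ : ℤ, ℂ) j = if j = k then 1 else 0 := by
  rw [e, lp.single_apply]
  split_ifs with h
  · subst h; simp
  · simp [h]

lemma coord_eq_inner (f : H) (j : ℤ) : ⟪e j, f⟫_ℂ = f j := by
  rw [e, lp.inner_single_left]
  simp [RCLike.inner_apply]

lemma inner_e_e (a b : ℤ) : ⟪e a, e b⟫_ℂ = if a = b then 1 else 0 := by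
  rw [coord_eq_inner, e_apply]

lemma ext_coord {f g : H} (h : ∀ j, ⟪e j, f⟫_ℂ = ⟪e j, g⟫_ℂ) : f = g := by
  apply lp.ext
  funext j
  simpa [coord_eq_inner] using h j

lemma dense_span_e : Dense ((Submodule.span ℂ (Set.range e) : Submodule ℂ H) : Set H) := by
  intro f
  have hs : HasSum (fun i => lp.single 2 i (f i) : ℤ → H) f :=
    lp.hasSum_single ENNReal.ofNat_ne_top f
  refine mem_closure_of_tendsto hs (Filter.Eventually.of_forall fun s => ?_)
  refine Submodule.sum_mem _ fun i _ => ?_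
  have : lp.single 2 i (f i) = f i • e i := by
    rw [e, ← lp.single_smul]
    norm_num
  rw [this]
  exact Submodule.smul_mem _ _ (Submodule.subset_span ⟨i, rfl⟩)

set_option synthInstance.maxHeartbeats 400000 in
lemma clm_ext_e {A B : H →L[ℂ] H} (h : ∀ k, A (e k) = B (e k)) : A = B := by
  refine ContinuousLinearMap.ext_on dense_span_e ?_
  rintro x ⟨k, rfl⟩
  exact h k

lemma adjoint_apply_eq {A : H →L[ℂ] H} {σ : ℤ → ℤ} (hinj : Function.Injective σ)
    (hA : ∀ k, A (e k) = e (σ k)) (j : ℤ) : adjoint A (e (σ j)) = e j := by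
  apply ext_coord
  intro i
  rw [ContinuousLinearMap.adjoint_inner_right, hA, inner_e_e, inner_e_e]
  simp [hinj.eq_iff]

lemma adjoint_apply_eq_zero {A : H →L[ℂ] H} {σ : ℤ → ℤ}
    (hA : ∀ k, A (e k) = e (σ k)) {n : ℤ} (hn : ∀ j, σ j ≠ n) :
    adjoint A (e n) = 0 := by
  apply ext_coord
  intro i
  rw [ContinuousLinearMap.adjoint_inner_right, hA, inner_e_e]
  simp [hn i]

def lval : List Bool → ℤ
  | [] => 0
  | b :: t => 2 * lval t + (if b then 1 else 0)

lemma lval_nonneg (α : List Bool) : 0 ≤ lval α := by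
  induction α with
  | nil => simp [lval]
  | cons b t ih => simp only [lval]; split_ifs <;> omega

lemma lval_lt (α : List Bool) : lval α < 2 ^ α.length := by
  induction α with
  | nil => simp [lval]
  | cons b t ih =>
    simp only [lval, List.length_cons, pow_succ]
    split_ifs <;> omega
set_option maxHeartbeats 1000000 in
set_option synthInstance.maxHeartbeats 400000 in
/-- In the canonical representation of `Q₂` on `ℓ²(ℤ)`, for a word `α` in `{1,2}` of
length `m` (encoded as a list of booleans, `true ↦ S₁`, `false ↦ S₂`), the range of the
projection `P_α = S_α S_α*` is the closed span of `{e_{2^m k + l} : k ∈ ℤ}` for some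
`0 ≤ l < 2^m`; consequently `U^h P_α U^{-h}` and `P_α` are orthogonal for `0 < h < 2^m`. -/
theorem stmt12 (U S₁ S₂ : lp (fun _ : ℤ => ℂ) 2 →L[ℂ] lp (fun _ : ℤ => ℂ) 2)
    (hU : ∀ k : ℤ, U (e k) = e (k + 1))
    (hS₂ : ∀ k : ℤ, S₂ (e k) = e (2 * k))
    (hS₁ : S₁ = U * S₂)
    (α : List Bool) (Sα Pα : lp (fun _ : ℤ => ℂ) 2 →L[ℂ] lp (fun _ : ℤ => ℂ) 2)
    (hSα : Sα = (α.map fun b => if b then S₁ else S₂).prod)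
    (hPα : Pα = Sα * adjoint Sα) :
    (∃ l : ℤ, 0 ≤ l ∧ l < 2 ^ α.length ∧
      Set.range ⇑Pα =
        closure ((Submodule.span ℂ (Set.range fun k : ℤ => e (2 ^ α.length * k + l)) :
          Submodule ℂ (lp (fun _ : ℤ => ℂ) 2)) : Set (lp (fun _ : ℤ => ℂ) 2))) ∧
    (∀ h : ℕ, 0 < h → (h : ℤ) < 2 ^ α.length →
      (U ^ h * Pα * adjoint (U ^ h)) * Pα = 0) := by
  set m := α.length with hm
  set l := lval α with hl
  have hS1e : ∀ k : ℤ, S₁ (e k) = e (2 * k + 1) := by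
    intro k
    rw [hS₁, ContinuousLinearMap.mul_apply, hS₂, hU]
  -- action of Sα on basis vectors
  have hSαe : ∀ k : ℤ, Sα (e k) = e (2 ^ m * k + l) := by
    rw [hSα, hm, hl]
    clear hl hm hSα hPα
    induction α with
    | nil => intro k; simp [lval]
    | cons b t ih =>
      intro k
      rw [List.map_cons, List.prod_cons, ContinuousLinearMap.mul_apply, ih]
      cases b
      · rw [if_neg (by simp), hS₂]
        congr 1
        simp only [lval, List.length_cons, pow_succ, Bool.false_eq_true, if_false]
        ring
      · rw [if_pos rfl, hS1e]
        congr 1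
        simp only [lval, List.length_cons, pow_succ, if_true]
        ring
  have h2pos : (0:ℤ) < 2 ^ m := by positivity
  have hσinj : Function.Injective (fun k : ℤ => 2 ^ m * k + l) := by
    intro a b hab
    simp only at hab
    have h1 : 2 ^ m * a = 2 ^ m * b := by linarith
    exact mul_left_cancel₀ (ne_of_gt h2pos) h1
  -- action of Pα on basis vectors
  have hPe_mem : ∀ j : ℤ, Pα (e (2 ^ m * j + l)) = e (2 ^ m * j + l) := by
    intro j
    rw [hPα, ContinuousLinearMap.mul_apply,
      adjoint_apply_eq hσinj hSαe j, hSαe]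
  have hPe_zero : ∀ n : ℤ, (∀ j : ℤ, 2 ^ m * j + l ≠ n) → Pα (e n) = 0 := by
    intro n hn
    rw [hPα, ContinuousLinearMap.mul_apply, adjoint_apply_eq_zero hSαe hn, map_zero]
  have hUpow : ∀ (nn : ℕ) (k : ℤ), (U ^ nn) (e k) = e (k + nn) := by
    intro nn
    induction nn with
    | zero => intro k; simp
    | succ n ih =>
      intro k
      rw [pow_succ, ContinuousLinearMap.mul_apply, hU, ih]
      congr 1
      push_cast
      ring
  refine ⟨⟨l, lval_nonneg α, lval_lt α, ?_⟩, ?_⟩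
  · -- range equality
    set T := (Submodule.span ℂ (Set.range fun k : ℤ => e (2 ^ m * k + l)) :
      Submodule ℂ H) with hT
    have hTclosed : IsClosed (T.topologicalClosure : Set H) :=
      Submodule.isClosed_topologicalClosure T
    have hclosure : closure (T : Set H) = (T.topologicalClosure : Set H) :=
      (Submodule.topologicalClosure_coe T).symm
    rw [hclosure]
    apply Set.Subset.antisymm
    · -- range ⊆ closed span
      have hle : Submodule.span ℂ (Set.range e) ≤ T.topologicalClosure.comap (Pα : H →ₗ[ℂ] H) := by
        rw [Submodule.span_le]
        rintro x ⟨n, rfl⟩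
        simp only [SetLike.mem_coe, Submodule.mem_comap, ContinuousLinearMap.coe_coe]
        by_cases hn : ∃ j : ℤ, 2 ^ m * j + l = n
        · obtain ⟨j, rfl⟩ := hn
          rw [hPe_mem j]
          exact Submodule.le_topologicalClosure T (Submodule.subset_span ⟨j, rfl⟩)
        · push_neg at hn
          rw [hPe_zero n hn]
          exact Submodule.zero_mem _
      have hcl : IsClosed ((T.topologicalClosure.comap (Pα : H →ₗ[ℂ] H) : Submodule ℂ H) : Set H) :=
        hTclosed.preimage Pα.continuous
      have hsub : ((Submodule.span ℂ (Set.range e) : Submodule ℂ H) : Set H) ⊆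
          ((T.topologicalClosure.comap (Pα : H →ₗ[ℂ] H) : Submodule ℂ H) : Set H) := fun x hx => hle hx
      have hall := closure_minimal hsub hcl
      rw [dense_span_e.closure_eq] at hall
      rintro _ ⟨x, rfl⟩
      exact hall (Set.mem_univ x)
    · -- closed span ⊆ range
      have hle : T ≤ LinearMap.eqLocus (Pα : H →ₗ[ℂ] H) (LinearMap.id : H →ₗ[ℂ] H) := by
        rw [hT, Submodule.span_le]
        rintro x ⟨j, rfl⟩
        simp only [SetLike.mem_coe, LinearMap.mem_eqLocus, ContinuousLinearMap.coe_coe,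
          LinearMap.id_apply]
        exact hPe_mem j
      have hfix : (T : Set H) ⊆ {x : H | Pα x = x} := by
        intro x hx
        have h2 := hle hx
        simpa [LinearMap.mem_eqLocus] using h2
      have hclosedfix : IsClosed {x : H | Pα x = x} :=
        isClosed_eq Pα.continuous continuous_id
      intro x hx
      have hx2 : x ∈ {x : H | Pα x = x} := by
        rw [← hclosure] at hx
        exact closure_minimal hfix hclosedfix hx
      exact ⟨x, hx2⟩
  · -- orthogonality
    intro h hpos hlt
    have hUadj : ∀ n : ℤ, adjoint (U ^ h) (e n) = e (n - h) := by
      intro n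
      have hinj : Function.Injective (fun k : ℤ => k + (h : ℤ)) := fun a b hab => by simp only at hab; omega
      have := adjoint_apply_eq (A := U ^ h) (σ := fun k => k + (h : ℤ)) hinj (hUpow h) (n - h)
      simpa using this
    apply clm_ext_e (B := 0)
    intro n
    rw [ContinuousLinearMap.mul_apply, ContinuousLinearMap.mul_apply,
      ContinuousLinearMap.mul_apply, ContinuousLinearMap.zero_apply]
    by_cases hn : ∃ j : ℤ, 2 ^ m * j + l = n
    · obtain ⟨j, rfl⟩ := hn
      rw [hPe_mem j, hUadj]
      have hz : ∀ j' : ℤ, 2 ^ m * j' + l ≠ 2 ^ m * j + l - h := by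
        intro j' hj'
        have hd : (h : ℤ) = 2 ^ m * (j - j') := by linarith [hj', mul_sub ((2:ℤ) ^ m) j j']
        have hpos' : (0:ℤ) < h := by exact_mod_cast hpos
        have hjj : 0 < j - j' := by nlinarith
        have : (1:ℤ) ≤ j - j' := hjj
        nlinarith
      rw [hPe_zero _ hz]; simp
    · push_neg at hn
      rw [hPe_zero _ hn]; simp
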